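/- Let Ω ⊂ ℝⁿ have finite Lebesgue measure, let γ ∈ L¹(ℝⁿ) be even, and let f : Ω × ℝ → ℝ be a Carathéodory function with |f(x,t)| ≤ a₁ + a₂|t|^α for all x ∈ Ω, t ∈ ℝ, where α ≥ 1. Let u, v ∈ L²(ℝⁿ) vanish almost everywhere outside Ω with u|_Ω, v|_Ω ∈ L^{α+1}(Ω). Then the function i(τ) := I[u + τv] is differentiable at τ = 0 with i′(0) = B[u,v] − ∫_Ω f(x,u(x)) v(x) dx. In particular, if u is a critical point of I in the sense that i′(0) = 0 for every such v, then B[u,v] = ∫_Ω f(x,u(x)) v(x) dx for every such v, i.e. u is a weak solution of −𝓛u = f(x,u) in Ω. -/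

import Mathlib

open MeasureTheory

/-- The nonlocal bilinear form
`B[u,v] = (1/2) ∬ (u(y)-u(x)) γ(x-y) (v(y)-v(x)) dy dx`. -/
noncomputable def nonlocalForm (n : ℕ) (γ u v : EuclideanSpace ℝ (Fin n) → ℝ) : ℝ :=
  (1/2) * ∫ x, ∫ y, (u y - u x) * γ (x - y) * (v y - v x)

/-- `F(x,t) = ∫₀ᵗ f(x,τ) dτ`. -/
noncomputable def Fanti (n : ℕ) (f : EuclideanSpace ℝ (Fin n) → ℝ → ℝ)
    (x : EuclideanSpace ℝ (Fin n)) (t : ℝ) : ℝ :=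
  ∫ τ in (0:ℝ)..t, f x τ

/-- The energy `I[u] = (1/2) B[u,u] − ∫_Ω F(x,u(x)) dx`. -/
noncomputable def energy (n : ℕ) (Ω : Set (EuclideanSpace ℝ (Fin n)))
    (γ : EuclideanSpace ℝ (Fin n) → ℝ) (f : EuclideanSpace ℝ (Fin n) → ℝ → ℝ)
    (u : EuclideanSpace ℝ (Fin n) → ℝ) : ℝ :=
  (1/2) * nonlocalForm n γ u u - ∫ x in Ω, Fanti n f x (u x)

/-- Admissible test functions: `v ∈ L²(ℝⁿ)`, `v = 0` a.e. outside `Ω`, and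
`v|_Ω ∈ L^{α+1}(Ω)`. -/
def Admissible (n : ℕ) (Ω : Set (EuclideanSpace ℝ (Fin n))) (α : ℝ)
    (v : EuclideanSpace ℝ (Fin n) → ℝ) : Prop :=
  MemLp v 2 (volume : Measure (EuclideanSpace ℝ (Fin n))) ∧
    (∀ᵐ x, x ∉ Ω → v x = 0) ∧
    MemLp v (ENNReal.ofReal (α + 1)) (volume.restrict Ω)

section Aux
open Filter
open scoped ENNReal
variable {n : ℕ}
local notation "E" => EuclideanSpace ℝ (Fin n)

lemma sq_integrable {u : E → ℝ} (hu : MemLp u 2 (volume : Measure E)) :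
    Integrable (fun x => u x * u x) (volume : Measure E) := by
  rw [← memLp_one_iff_integrable]
  have h : (1:ℝ≥0∞)/1 = 1/2 + 1/2 := by
    rw [one_div, one_div, ENNReal.inv_two_add_inv_two, inv_one]
  have := hu.smul (φ := u) (r := 1) hu (hpqr := ⟨by simp only [← one_div]; exact h.symm⟩)
  exact this

lemma mul_abs_le_sq (a b c d : ℝ) : |(a - b) * (c - d)| ≤ a^2 + b^2 + c^2 + d^2 := by
  rw [abs_le]
  constructor <;> nlinarith [sq_nonneg (a - b + c - d), sq_nonneg (a - b - c + d), sq_nonneg (a+b), sq_nonneg (a-b), sq_nonneg (c+d), sq_nonneg (c-d)]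

lemma aux_prod_integrable {γ u v : E → ℝ} (hγ : Integrable γ (volume : Measure E))
    (hu : MemLp u 2 (volume : Measure E)) (hv : MemLp v 2 (volume : Measure E)) :
    Integrable (fun p : E × E => (u p.2 - u p.1) * γ (p.1 - p.2) * (v p.2 - v p.1))
      ((volume : Measure E).prod volume) := by
  set μ : Measure E := volume
  -- the sheared function
  set g : E × E → ℝ := fun q => (u q.2 - u (q.1 + q.2)) * γ q.1 * (v q.2 - v (q.1 + q.2)) with hg
  have hadd : MeasurePreserving (fun p : E × E => (p.1 + p.2, p.2)) (μ.prod μ) (μ.prod μ) :=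
    measurePreserving_add_prod _ _
  have haddq : Measure.QuasiMeasurePreserving (fun q : E × E => q.1 + q.2) (μ.prod μ) μ :=
    Measure.quasiMeasurePreserving_fst.comp hadd.quasiMeasurePreserving
  have hu_asm := hu.aestronglyMeasurable
  have hv_asm := hv.aestronglyMeasurable
  have hgm : AEStronglyMeasurable g (μ.prod μ) := by
    exact ((hu_asm.comp_snd.sub (hu_asm.comp_quasiMeasurePreserving haddq)).mul
      hγ.aestronglyMeasurable.comp_fst).mul
      (hv_asm.comp_snd.sub (hv_asm.comp_quasiMeasurePreserving haddq))
  -- integrable squares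
  have hu2 := sq_integrable hu
  have hv2 := sq_integrable hv
  have hgint : Integrable g (μ.prod μ) := by
    rw [integrable_prod_iff hgm]
    constructor
    · refine Eventually.of_forall fun z => ?_
      have hT : MeasurePreserving (fun y : E => z + y) μ μ := measurePreserving_add_left _ z
      have hu2T : Integrable (fun y => u (z + y) * u (z + y)) μ :=
        (hT.integrable_comp hu2.aestronglyMeasurable).mpr hu2
      have hv2T : Integrable (fun y => v (z + y) * v (z + y)) μ :=
        (hT.integrable_comp hv2.aestronglyMeasurable).mpr hv2
      have hb : Integrable (fun y => |γ z| * (u y * u y + u (z + y) * u (z + y)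
          + v y * v y + v (z + y) * v (z + y))) μ :=
        (((hu2.add hu2T).add hv2).add hv2T).const_mul _
      refine hb.mono' ?_ (Eventually.of_forall fun y => ?_)
      · have huT : AEStronglyMeasurable (fun y => u (z + y)) μ :=
          hu_asm.comp_quasiMeasurePreserving hT.quasiMeasurePreserving
        have hvT : AEStronglyMeasurable (fun y => v (z + y)) μ :=
          hv_asm.comp_quasiMeasurePreserving hT.quasiMeasurePreserving
        exact ((((hu_asm.sub huT).mul (aestronglyMeasurable_const (b := γ z))).mul
          (hv_asm.sub hvT)).congr (Eventually.of_forall fun y => by simp [g]))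
      · simp only [g, Real.norm_eq_abs]
        have h1 : |(u y - u (z + y)) * γ z * (v y - v (z + y))|
            = |γ z| * |(u y - u (z + y)) * (v y - v (z + y))| := by
          rw [abs_mul, abs_mul, abs_mul]; ring
        rw [h1]
        have := mul_abs_le_sq (u y) (u (z + y)) (v y) (v (z + y))
        have h2 : (0:ℝ) ≤ |γ z| := abs_nonneg _
        calc |γ z| * |(u y - u (z + y)) * (v y - v (z + y))|
            ≤ |γ z| * ((u y)^2 + (u (z+y))^2 + (v y)^2 + (v (z+y))^2) := by
              exact mul_le_mul_of_nonneg_left this h2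
          _ = |γ z| * (u y * u y + u (z + y) * u (z + y) + v y * v y + v (z + y) * v (z + y)) := by
              ring
    · -- outer bound
      set K : ℝ := 2 * ∫ y, u y * u y ∂μ + 2 * ∫ y, v y * v y ∂μ with hK
      refine (hγ.norm.mul_const K).mono' hgm.norm.integral_prod_right' ?_
      refine Eventually.of_forall fun z => ?_
      have hT : MeasurePreserving (fun y : E => z + y) μ μ := measurePreserving_add_left _ z
      have hu2T : Integrable (fun y => u (z + y) * u (z + y)) μ :=
        (hT.integrable_comp hu2.aestronglyMeasurable).mpr hu2
      have hv2T : Integrable (fun y => v (z + y) * v (z + y)) μ :=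
        (hT.integrable_comp hv2.aestronglyMeasurable).mpr hv2
      have hnn : (0:ℝ) ≤ ∫ y, ‖g (z, y)‖ ∂μ := integral_nonneg fun y => norm_nonneg _
      rw [Real.norm_eq_abs, abs_of_nonneg hnn]
      calc ∫ y, ‖g (z, y)‖ ∂μ
          ≤ ∫ y, |γ z| * (u y * u y + u (z + y) * u (z + y)
              + v y * v y + v (z + y) * v (z + y)) ∂μ := by
            apply integral_mono_of_nonneg (Eventually.of_forall fun y => norm_nonneg _)
              ((((hu2.add hu2T).add hv2).add hv2T).const_mul _)
            refine Eventually.of_forall fun y => ?_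
            simp only [g, Real.norm_eq_abs]
            have h1 : |(u y - u (z + y)) * γ z * (v y - v (z + y))|
                = |γ z| * |(u y - u (z + y)) * (v y - v (z + y))| := by
              rw [abs_mul, abs_mul, abs_mul]; ring
            rw [h1]
            calc |γ z| * |(u y - u (z + y)) * (v y - v (z + y))|
                ≤ |γ z| * ((u y)^2 + (u (z+y))^2 + (v y)^2 + (v (z+y))^2) :=
                  mul_le_mul_of_nonneg_left
                    (mul_abs_le_sq (u y) (u (z + y)) (v y) (v (z + y))) (abs_nonneg _)
              _ = |γ z| * (u y * u y + u (z + y) * u (z + y)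
                  + v y * v y + v (z + y) * v (z + y)) := by ring
        _ = |γ z| * (∫ y, (u y * u y + u (z + y) * u (z + y)
              + v y * v y + v (z + y) * v (z + y)) ∂μ) := integral_const_mul _ _
        _ = ‖γ z‖ * K := by
            have hs2 : Integrable (fun y => u y * u y + u (z + y) * u (z + y)) μ :=
              hu2.add hu2T
            have hs3 : Integrable (fun y => u y * u y + u (z + y) * u (z + y) + v y * v y) μ :=
              hs2.add hv2
            rw [integral_add hs3 hv2T, integral_add hs2 hv2, integral_add hu2 hu2T]
            have e1 : ∫ y, u (z + y) * u (z + y) ∂μ = ∫ y, u y * u y ∂μ :=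
              integral_add_left_eq_self (fun y => u y * u y) z
            have e2 : ∫ y, v (z + y) * v (z + y) ∂μ = ∫ y, v y * v y ∂μ :=
              integral_add_left_eq_self (fun y => v y * v y) z
            rw [e1, e2, Real.norm_eq_abs, hK]; ring
  -- transfer along the measure-preserving shear
  have hΨ : MeasurePreserving (fun p : E × E => (p.1 - p.2, p.2)) (μ.prod μ) (μ.prod μ) :=
    measurePreserving_sub_prod _ _
  have := (hΨ.integrable_comp hgm).mpr hgint
  have heq : (g ∘ fun p : E × E => (p.1 - p.2, p.2))
      = fun p : E × E => (u p.2 - u p.1) * γ (p.1 - p.2) * (v p.2 - v p.1) := by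
    funext p
    simp only [Function.comp_apply, g, sub_add_cancel]
  rwa [heq] at this

lemma nlf_expand {γ u v : E → ℝ} (hγ : Integrable γ (volume : Measure E))
    (hu : MemLp u 2 (volume : Measure E)) (hv : MemLp v 2 (volume : Measure E)) (τ : ℝ) :
    nonlocalForm n γ (fun x => u x + τ * v x) (fun x => u x + τ * v x)
      = nonlocalForm n γ u u + τ * (2 * nonlocalForm n γ u v)
        + τ^2 * nonlocalForm n γ v v := by
  have Puu := aux_prod_integrable hγ hu hu
  have Puv := aux_prod_integrable hγ hu hv
  have Pvv := aux_prod_integrable hγ hv hv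
  set μ : Measure E := volume
  have key : (∫ x, ∫ y, ((fun x => u x + τ * v x) y - (fun x => u x + τ * v x) x) * γ (x - y)
        * ((fun x => u x + τ * v x) y - (fun x => u x + τ * v x) x) ∂μ ∂μ)
      = (∫ x, ∫ y, (u y - u x) * γ (x - y) * (u y - u x) ∂μ ∂μ)
        + ((2 * τ) * (∫ x, ∫ y, (u y - u x) * γ (x - y) * (v y - v x) ∂μ ∂μ)
          + τ^2 * (∫ x, ∫ y, (v y - v x) * γ (x - y) * (v y - v x) ∂μ ∂μ)) := by
    have hae : ∀ᵐ x ∂μ, (∫ y, ((fun x => u x + τ * v x) y - (fun x => u x + τ * v x) x) * γ (x - y)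
        * ((fun x => u x + τ * v x) y - (fun x => u x + τ * v x) x) ∂μ)
        = (∫ y, (u y - u x) * γ (x - y) * (u y - u x) ∂μ)
          + ((2 * τ) * (∫ y, (u y - u x) * γ (x - y) * (v y - v x) ∂μ)
            + τ^2 * (∫ y, (v y - v x) * γ (x - y) * (v y - v x) ∂μ)) := by
      filter_upwards [Puu.prod_right_ae, Puv.prod_right_ae, Pvv.prod_right_ae] with x h1 h2 h3
      have h2' : Integrable (fun y => (2 * τ) * ((u y - u x) * γ (x - y) * (v y - v x))) μ :=
        h2.const_mul _
      have h3' : Integrable (fun y => τ^2 * ((v y - v x) * γ (x - y) * (v y - v x))) μ :=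
        h3.const_mul _
      have step1 : (∫ y, ((fun x => u x + τ * v x) y - (fun x => u x + τ * v x) x) * γ (x - y)
          * ((fun x => u x + τ * v x) y - (fun x => u x + τ * v x) x) ∂μ)
          = ∫ y, ((u y - u x) * γ (x - y) * (u y - u x)
            + ((2 * τ) * ((u y - u x) * γ (x - y) * (v y - v x))
              + τ^2 * ((v y - v x) * γ (x - y) * (v y - v x)))) ∂μ := by
        apply integral_congr_ae
        refine Eventually.of_forall fun y => ?_
        simp only
        ring
      have h23 : Integrable (fun y => (2 * τ) * ((u y - u x) * γ (x - y) * (v y - v x))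
          + τ^2 * ((v y - v x) * γ (x - y) * (v y - v x))) μ := h2'.add h3'
      rw [step1, integral_add h1 h23, integral_add h2' h3',
        integral_const_mul, integral_const_mul]
    rw [integral_congr_ae hae]
    have g1 : Integrable (fun x => ∫ y, (u y - u x) * γ (x - y) * (u y - u x) ∂μ) μ :=
      Puu.integral_prod_left
    have g2 : Integrable (fun x => (2 * τ) * ∫ y, (u y - u x) * γ (x - y) * (v y - v x) ∂μ) μ :=
      Puv.integral_prod_left.const_mul _
    have g3 : Integrable (fun x => τ^2 * ∫ y, (v y - v x) * γ (x - y) * (v y - v x) ∂μ) μ :=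
      Pvv.integral_prod_left.const_mul _
    have g23 : Integrable (fun x => (2 * τ) * (∫ y, (u y - u x) * γ (x - y) * (v y - v x) ∂μ)
        + τ^2 * (∫ y, (v y - v x) * γ (x - y) * (v y - v x) ∂μ)) μ := g2.add g3
    rw [integral_add g1 g23, integral_add g2 g3, integral_const_mul, integral_const_mul]
  simp only [nonlocalForm]
  rw [key]
  ring

lemma f_unc_meas {f : E → ℝ → ℝ} (hmeas : ∀ t : ℝ, Measurable fun x : E => f x t)
    (hcont : ∀ x, Continuous (f x)) : Measurable fun q : ℝ × E => f q.2 q.1 :=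
  measurable_uncurry_of_continuous_of_measurable (u := fun t (x : E) => f x t) hcont hmeas

lemma fprim_hasDerivAt {f : E → ℝ → ℝ} (hcont : ∀ x, Continuous (f x)) (x : E) (t : ℝ) :
    HasDerivAt (fun s => ∫ τ in (0:ℝ)..s, f x τ) (f x t) t :=
  intervalIntegral.integral_hasDerivAt_right ((hcont x).intervalIntegrable _ _)
    ((hcont x).stronglyMeasurableAtFilter _ _) (hcont x).continuousAt

lemma Fanti_unc_meas {f : E → ℝ → ℝ} (hmeas : ∀ t : ℝ, Measurable fun x : E => f x t)
    (hcont : ∀ x, Continuous (f x)) : Measurable fun q : ℝ × E => Fanti n f q.2 q.1 := by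
  apply measurable_uncurry_of_continuous_of_measurable (u := fun t (x : E) => Fanti n f x t)
  · intro x
    exact continuous_iff_continuousAt.mpr fun t => (fprim_hasDerivAt hcont x t).continuousAt
  · intro t
    have hsm : StronglyMeasurable (Function.uncurry fun (x : E) (τ : ℝ) => f x τ) :=
      ((f_unc_meas hmeas hcont).comp measurable_swap).stronglyMeasurable
    have h1 : StronglyMeasurable fun x : E => ∫ τ in Set.Ioc (0:ℝ) t, f x τ :=
      hsm.integral_prod_right
    have h2 : StronglyMeasurable fun x : E => ∫ τ in Set.Ioc t (0:ℝ), f x τ :=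
      hsm.integral_prod_right
    exact (h1.sub h2).measurable

lemma abs_le_of_mem_uIoc {τ t : ℝ} (h : τ ∈ Set.uIoc 0 t) : |τ| ≤ |t| := by
  rcases Set.mem_uIoc.mp h with ⟨h1, h2⟩ | ⟨h1, h2⟩
  · rw [abs_of_pos h1, abs_of_pos (h1.trans_le h2)]; exact h2
  · have ht : t < 0 := lt_of_lt_of_le h1 h2
    rw [abs_of_nonpos h2, abs_of_neg ht]
    linarith

lemma Fanti_bound {f : E → ℝ → ℝ} {a₁ a₂ α : ℝ} (ha₁ : 0 < a₁) (ha₂ : 0 < a₂) (hα : 1 ≤ α)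
    {x : E} (hgf : ∀ t : ℝ, |f x t| ≤ a₁ + a₂ * |t| ^ α) (t : ℝ) :
    ‖Fanti n f x t‖ ≤ a₁ * ‖t‖ + a₂ * ‖t‖ ^ (α + 1) := by
  have hα0 : (0:ℝ) < α := lt_of_lt_of_le one_pos hα
  have hC : ∀ τ ∈ Set.uIoc (0:ℝ) t, ‖f x τ‖ ≤ a₁ + a₂ * |t| ^ α := by
    intro τ hτ
    rw [Real.norm_eq_abs]
    refine (hgf τ).trans ?_
    have := Real.rpow_le_rpow (abs_nonneg τ) (abs_le_of_mem_uIoc hτ) hα0.le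
    nlinarith
  have h := intervalIntegral.norm_integral_le_of_norm_le_const hC
  rw [sub_zero] at h
  refine h.trans ?_
  rw [Real.norm_eq_abs]
  have habs : |t| ^ α * |t| = |t| ^ (α + 1) := by
    rcases eq_or_ne t 0 with rfl | ht
    · simp [Real.zero_rpow (by linarith : α + 1 ≠ 0)]
    · rw [Real.rpow_add (abs_pos.mpr ht), Real.rpow_one]
  nlinarith [Real.rpow_nonneg (abs_nonneg t) α, abs_nonneg t]

lemma J_hasDerivAt {Ω : Set E} (hΩ : MeasurableSet Ω) (hΩfin : volume Ω < ⊤)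
    {f : E → ℝ → ℝ} (hmeas : ∀ t : ℝ, Measurable fun x : E => f x t)
    (hcont : ∀ x, Continuous (f x))
    {a₁ a₂ α : ℝ} (ha₁ : 0 < a₁) (ha₂ : 0 < a₂) (hα : 1 ≤ α)
    (hgrowth : ∀ x ∈ Ω, ∀ t : ℝ, |f x t| ≤ a₁ + a₂ * |t| ^ α)
    {u v : E → ℝ}
    (huΩ : MemLp u (ENNReal.ofReal (α + 1)) (volume.restrict Ω))
    (hvΩ : MemLp v (ENNReal.ofReal (α + 1)) (volume.restrict Ω)) :
    HasDerivAt (fun τ : ℝ => ∫ x in Ω, Fanti n f x (u x + τ * v x))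
      (∫ x in Ω, f x (u x + 0 * v x) * v x) 0 := by
  have hα0 : (0:ℝ) < α := lt_of_lt_of_le one_pos hα
  set μΩ : Measure E := volume.restrict Ω with hμΩ
  haveI : IsFiniteMeasure μΩ := ⟨by rwa [Measure.restrict_apply_univ]⟩
  set P : ℝ≥0∞ := ENNReal.ofReal (α + 1) with hP
  have hP0 : P ≠ 0 := by simp [hP, ENNReal.ofReal_eq_zero]; linarith
  have hPtop : P ≠ ⊤ := ENNReal.ofReal_ne_top
  have h1P : (1:ℝ≥0∞) ≤ P := by
    rw [hP, ← ENNReal.ofReal_one]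
    exact ENNReal.ofReal_le_ofReal (by linarith)
  have hu_asm : AEStronglyMeasurable u μΩ := huΩ.aestronglyMeasurable
  have hv_asm : AEStronglyMeasurable v μΩ := hvΩ.aestronglyMeasurable
  -- integrability facts
  have hu1 : Integrable u μΩ := memLp_one_iff_integrable.mp (huΩ.mono_exponent h1P)
  have hv1 : Integrable v μΩ := memLp_one_iff_integrable.mp (hvΩ.mono_exponent h1P)
  have huα1 : Integrable (fun x => ‖u x‖ ^ (α + 1)) μΩ := by
    have h := huΩ.norm_rpow hP0 hPtop
    rw [hP, ENNReal.toReal_ofReal (by linarith)] at h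
    exact memLp_one_iff_integrable.mp h
  -- Hölder for the bound
  set Q : ℝ≥0∞ := ENNReal.ofReal α with hQ
  have hQ0 : Q ≠ 0 := by simp [hQ, ENNReal.ofReal_eq_zero]; linarith
  have hQtop : Q ≠ ⊤ := ENNReal.ofReal_ne_top
  have hQP : Q + 1 = P := by
    rw [hQ, hP, ← ENNReal.ofReal_one, ← ENNReal.ofReal_add (by linarith) zero_le_one]
  have hpqr : (1:ℝ≥0∞)/1 = 1/(P/Q) + 1/P := by
    rw [one_div (P/Q), ENNReal.inv_div (Or.inr hPtop) (Or.inr hP0), one_div (1:ℝ≥0∞), inv_one,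
      ENNReal.div_add_div_same, hQP, ENNReal.div_self hP0 hPtop]
  have hw : MemLp (fun x => ‖u x‖ + ‖v x‖) P μΩ := huΩ.norm.add hvΩ.norm
  have hφ : MemLp (fun x => (‖u x‖ + ‖v x‖) ^ α) (P / Q) μΩ := by
    have h := hw.norm_rpow_div Q
    have heq : (fun x => ‖(fun x => ‖u x‖ + ‖v x‖) x‖ ^ Q.toReal)
        = fun x => (‖u x‖ + ‖v x‖) ^ α := by
      funext x
      rw [Real.norm_of_nonneg (by positivity), hQ, ENNReal.toReal_ofReal (by linarith)]
    rwa [heq] at h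
  have hprod : Integrable (fun x => (‖u x‖ + ‖v x‖) ^ α * v x) μΩ := by
    rw [← memLp_one_iff_integrable]
    have h := hvΩ.smul hφ (r := 1) (hpqr := ⟨by simp only [← one_div]; exact hpqr.symm⟩)
    exact h
  set bound : E → ℝ := fun x => (a₁ + a₂ * (‖u x‖ + ‖v x‖) ^ α) * ‖v x‖ with hbound
  have hbound_int : Integrable bound μΩ := by
    have heq : bound = fun x => a₁ * ‖v x‖ + a₂ * ‖(‖u x‖ + ‖v x‖) ^ α * v x‖ := by
      funext x
      rw [norm_mul, Real.norm_of_nonneg (Real.rpow_nonneg (by positivity) α)]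
      ring
    rw [heq]
    exact (hv1.norm.const_mul a₁).add (hprod.norm.const_mul a₂)
  -- measurability of composed functions
  have hFu := Fanti_unc_meas hmeas hcont
  have hfu := f_unc_meas hmeas hcont
  have hpair : ∀ τ : ℝ, AEMeasurable (fun x => (u x + τ * v x, x)) μΩ := fun τ =>
    (hu_asm.aemeasurable.add (hv_asm.aemeasurable.const_mul τ)).prodMk aemeasurable_id
  have hF_meas : ∀ τ : ℝ, AEStronglyMeasurable (fun x => Fanti n f x (u x + τ * v x)) μΩ :=
    fun τ => (hFu.comp_aemeasurable (hpair τ)).aestronglyMeasurable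
  have hf_meas : ∀ τ : ℝ, AEStronglyMeasurable (fun x => f x (u x + τ * v x)) μΩ :=
    fun τ => (hfu.comp_aemeasurable (hpair τ)).aestronglyMeasurable
  -- apply the dominated-derivative theorem
  have key := hasDerivAt_integral_of_dominated_loc_of_deriv_le
    (F := fun τ : ℝ => fun x => Fanti n f x (u x + τ * v x))
    (F' := fun τ : ℝ => fun x => f x (u x + τ * v x) * v x)
    (x₀ := (0:ℝ)) (bound := bound) (μ := μΩ) (s := Metric.ball (0:ℝ) 1) (Metric.ball_mem_nhds _ one_pos)
    (Eventually.of_forall hF_meas)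
    ?hFint ((hf_meas 0).mul hv_asm) ?hbnd hbound_int ?hdiff
  · exact key.2
  case hFint =>
    have hb2 : Integrable (fun x => a₁ * ‖u x‖ + a₂ * ‖u x‖ ^ (α + 1)) μΩ :=
      (hu1.norm.const_mul a₁).add (huα1.const_mul a₂)
    refine hb2.mono' (hF_meas 0) ?_
    filter_upwards [ae_restrict_mem hΩ] with x hx
    have h := Fanti_bound ha₁ ha₂ hα (hgrowth x hx) (u x + 0 * v x)
    simpa using h
  case hbnd =>
    filter_upwards [ae_restrict_mem hΩ] with x hx τ hτ
    have hτ1 : |τ| ≤ 1 := by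
      have := mem_ball_zero_iff.mp hτ
      rw [Real.norm_eq_abs] at this
      exact this.le
    have habs : |u x + τ * v x| ≤ ‖u x‖ + ‖v x‖ := by
      calc |u x + τ * v x| ≤ |u x| + |τ * v x| := abs_add_le _ _
        _ ≤ ‖u x‖ + ‖v x‖ := by
            rw [abs_mul, Real.norm_eq_abs, Real.norm_eq_abs]
            nlinarith [abs_nonneg (v x)]
    rw [norm_mul]
    have h1 : ‖f x (u x + τ * v x)‖ ≤ a₁ + a₂ * (‖u x‖ + ‖v x‖) ^ α := by
      rw [Real.norm_eq_abs]
      refine (hgrowth x hx _).trans ?_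
      have h2 := Real.rpow_le_rpow (abs_nonneg _) habs hα0.le
      nlinarith
    exact mul_le_mul_of_nonneg_right h1 (norm_nonneg _)
  case hdiff =>
    refine Eventually.of_forall fun x => fun τ _ => ?_
    have h1 := fprim_hasDerivAt hcont x (u x + τ * v x)
    have h2 : HasDerivAt (fun s : ℝ => u x + s * v x) (v x) τ := by
      simpa using ((hasDerivAt_id τ).mul_const (v x)).const_add (u x)
    have h3 := h1.comp τ h2
    exact h3

end Aux

/-- Critical points of the nonlocal energy are weak solutions: for admissible `u` and
`v`, the map `τ ↦ I[u + τv]` is differentiable at `0` with derivative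
`B[u,v] − ∫_Ω f(x,u)v dx`; consequently, if this derivative vanishes for every
admissible `v`, then `B[u,v] = ∫_Ω f(x,u)v dx` for every admissible `v`, i.e. `u` is a
weak solution of `−𝓛u = f(x,u)` in `Ω`. -/

theorem critical_point_is_weak_solution
    (n : ℕ) (Ω : Set (EuclideanSpace ℝ (Fin n))) (hΩ : MeasurableSet Ω)
    (hΩfin : volume Ω < ⊤)
    (γ : EuclideanSpace ℝ (Fin n) → ℝ)
    (hγ : Integrable γ) (hγeven : ∀ z, γ (-z) = γ z)
    (f : EuclideanSpace ℝ (Fin n) → ℝ → ℝ)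
    (hmeas : ∀ t : ℝ, Measurable fun x => f x t)
    (hcont : ∀ x, Continuous (f x))
    (a₁ a₂ α : ℝ) (ha₁ : 0 < a₁) (ha₂ : 0 < a₂) (hα : 1 ≤ α)
    (hgrowth : ∀ x ∈ Ω, ∀ t : ℝ, |f x t| ≤ a₁ + a₂ * |t| ^ α)
    (u : EuclideanSpace ℝ (Fin n) → ℝ) (hu : Admissible n Ω α u) :
    (∀ v : EuclideanSpace ℝ (Fin n) → ℝ, Admissible n Ω α v →
      HasDerivAt (fun τ : ℝ => energy n Ω γ f (fun x => u x + τ * v x))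
        (nonlocalForm n γ u v - ∫ x in Ω, f x (u x) * v x) 0) ∧
    ((∀ v : EuclideanSpace ℝ (Fin n) → ℝ, Admissible n Ω α v →
        HasDerivAt (fun τ : ℝ => energy n Ω γ f (fun x => u x + τ * v x)) 0 0) →
      ∀ v : EuclideanSpace ℝ (Fin n) → ℝ, Admissible n Ω α v →
        nonlocalForm n γ u v = ∫ x in Ω, f x (u x) * v x) := by
  obtain ⟨hu2, hu0, huΩ⟩ := hu
  have main : ∀ v : EuclideanSpace ℝ (Fin n) → ℝ, Admissible n Ω α v →
      HasDerivAt (fun τ : ℝ => energy n Ω γ f (fun x => u x + τ * v x))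
        (nonlocalForm n γ u v - ∫ x in Ω, f x (u x) * v x) 0 := by
    intro v hv
    obtain ⟨hv2, hv0, hvΩ⟩ := hv
    have hJ := J_hasDerivAt hΩ hΩfin hmeas hcont ha₁ ha₂ hα hgrowth huΩ hvΩ
    have hfun : (fun τ : ℝ => energy n Ω γ f (fun x => u x + τ * v x))
        = fun τ : ℝ => ((1/2) * nonlocalForm n γ u u + τ * nonlocalForm n γ u v
            + τ^2 * ((1/2) * nonlocalForm n γ v v))
          - ∫ x in Ω, Fanti n f x (u x + τ * v x) := by
      funext τ
      simp only [energy]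
      rw [nlf_expand hγ hu2 hv2 τ]
      ring
    rw [hfun]
    have h1 : HasDerivAt (fun τ : ℝ => τ * nonlocalForm n γ u v)
        (nonlocalForm n γ u v) (0:ℝ) := hasDerivAt_mul_const _
    have h2 : HasDerivAt (fun τ : ℝ => τ^2 * ((1/2) * nonlocalForm n γ v v)) 0 (0:ℝ) := by
      simpa using (hasDerivAt_pow 2 (0:ℝ)).mul_const ((1/2) * nonlocalForm n γ v v)
    have hpoly : HasDerivAt (fun τ : ℝ => (1/2) * nonlocalForm n γ u u
        + τ * nonlocalForm n γ u v + τ^2 * ((1/2) * nonlocalForm n γ v v))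
        (nonlocalForm n γ u v) 0 := by
      have := (h1.const_add ((1/2) * nonlocalForm n γ u u)).add h2; rw [add_zero] at this; exact this
    have hfin := hpoly.sub hJ
    have hint : (∫ x in Ω, f x (u x + 0 * v x) * v x) = ∫ x in Ω, f x (u x) * v x := by
      simp only [zero_mul, add_zero]
    rwa [hint] at hfin
  refine ⟨main, fun hcrit v hv => ?_⟩
  have h1 := main v hv
  have h2 := hcrit v hv
  have h3 := h1.unique h2
  linarith
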